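/- Let 1 < p < ∞ and let w ∈ A_p^+ with constant A. Suppose additionally that w ∈ RH_r^+ and w^{1-p'} ∈ RH_r^- for some r > 1, in the sense that for all a < b < c < d positioned as below: (1/|I₁|)∫_{I₁} w^r ≤ C ((1/|I₂|)∫_{I₂} w)^r and (1/|I₄|)∫_{I₄} w^{r(1-p')} ≤ C ((1/|I₃|)∫_{I₃} w^{1-p'})^r, where for fixed a < d we set b = (d+3a)/4, c = (3d+a)/4, I₁=(a,b), I₂=(b,(b+c)/2), I₃=((b+c)/2,c), I₄=(c,d). Then w^r ∈ A_p^+: for all such a < d, ((1/|I₁|)∫_{I₁} w^r)((1/|I₄|)∫_{I₄} (w^r)^{1-p'})^{p-1} ≤ C' where C' depends only on A, C, p, r. -/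

import Mathlib

open MeasureTheory intervalIntegral

/-- Power bump (open property step): `A_p^+` together with the one-sided
reverse Hölder conditions `w ∈ RH_r^+` and `w^{1-p'} ∈ RH_r^-` on the four
quarter-type intervals yields `w^r ∈ A_p^+` on the outer pair of intervals. -/
theorem ap_plus_power_bump (p p' r A C : ℝ) (hp : 1 < p) (hp' : 1 / p + 1 / p' = 1)
    (hr : 1 < r) (w : ℝ → ℝ) (hw : ∀ x, 0 ≤ w x)
    (hloc : LocallyIntegrable w volume)
    (hlocr : LocallyIntegrable (fun x => w x ^ r) volume)
    (hloc' : LocallyIntegrable (fun x => w x ^ (1 - p')) volume)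
    (hlocr' : LocallyIntegrable (fun x => (w x ^ r) ^ (1 - p')) volume)
    (hA : ∀ a b c : ℝ, a < b → b < c →
      ((c - a) ^ p)⁻¹ * (∫ x in a..b, w x) *
        (∫ x in b..c, w x ^ (1 - p')) ^ (p - 1) ≤ A)
    (hRH₁ : ∀ a d : ℝ, a < d →
      ((d - a) / 4)⁻¹ * ∫ x in a..((d + 3 * a) / 4), w x ^ r ≤
        C * (((d - a) / 4)⁻¹ * ∫ x in ((d + 3 * a) / 4)..((a + d) / 2), w x) ^ r)
    (hRH₂ : ∀ a d : ℝ, a < d →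
      ((d - a) / 4)⁻¹ * ∫ x in ((3 * d + a) / 4)..d, (w x ^ r) ^ (1 - p') ≤
        C * (((d - a) / 4)⁻¹ *
          ∫ x in ((a + d) / 2)..((3 * d + a) / 4), w x ^ (1 - p')) ^ r) :
    ∃ C' : ℝ, ∀ a d : ℝ, a < d →
      (((d - a) / 4)⁻¹ * ∫ x in a..((d + 3 * a) / 4), w x ^ r) *
        (((d - a) / 4)⁻¹ *
          ∫ x in ((3 * d + a) / 4)..d, (w x ^ r) ^ (1 - p')) ^ (p - 1) ≤ C' := by
  refine ⟨(max C 0) * (max C 0) ^ (p - 1) * ((2 : ℝ) ^ p * max A 0) ^ r,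
    fun a d had => ?_⟩
  have hp1 : (0 : ℝ) ≤ p - 1 := by linarith
  have hr0 : (0 : ℝ) ≤ r := by linarith
  have hC0 : (0 : ℝ) ≤ max C 0 := le_max_right _ _
  have hA0 : (0 : ℝ) ≤ max A 0 := le_max_right _ _
  have hRH1 := hRH₁ a d had
  have hRH2 := hRH₂ a d had
  have hbm : (d + 3 * a) / 4 < (a + d) / 2 := by linarith
  have hmc : (a + d) / 2 < (3 * d + a) / 4 := by linarith
  have hab : a < (d + 3 * a) / 4 := by linarith
  have hcd : (3 * d + a) / 4 < d := by linarith
  have hAineq := hA ((d + 3 * a) / 4) ((a + d) / 2) ((3 * d + a) / 4) hbm hmc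
  set b1 := (d + 3 * a) / 4 with hb1
  set m := (a + d) / 2 with hm
  set c1 := (3 * d + a) / 4 with hc1
  set h := (d - a) / 4 with hh
  have hhpos : 0 < h := by rw [hh]; linarith
  set X := ∫ x in b1..m, w x with hX
  set Y := ∫ x in m..c1, w x ^ (1 - p') with hY
  set T1 := ∫ x in a..b1, w x ^ r with hT1
  set T2 := ∫ x in c1..d, (w x ^ r) ^ (1 - p') with hT2
  have hX0 : 0 ≤ X := intervalIntegral.integral_nonneg hbm.le (fun x _ => hw x)
  have hY0 : 0 ≤ Y :=
    intervalIntegral.integral_nonneg hmc.le (fun x _ => Real.rpow_nonneg (hw x) _)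
  have hT10 : 0 ≤ h⁻¹ * T1 := mul_nonneg (by positivity)
    (intervalIntegral.integral_nonneg hab.le (fun x _ => Real.rpow_nonneg (hw x) _))
  have hT20 : 0 ≤ h⁻¹ * T2 := mul_nonneg (by positivity)
    (intervalIntegral.integral_nonneg hcd.le
      (fun x _ => Real.rpow_nonneg (Real.rpow_nonneg (hw x) _) _))
  set u := h⁻¹ * X with hu
  set v := h⁻¹ * Y with hv
  have hu0 : 0 ≤ u := mul_nonneg (by positivity) hX0
  have hv0 : 0 ≤ v := mul_nonneg (by positivity) hY0
  -- key bound from the A_p^+ condition on the middle intervals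
  have key : u * v ^ (p - 1) ≤ 2 ^ p * max A 0 := by
    have hca : c1 - b1 = 2 * h := by rw [hc1, hb1, hh]; ring
    rw [hca] at hAineq
    have h2hpos : (0 : ℝ) < 2 * h := by linarith
    have h2h : (2 * h) ^ p = 2 ^ p * h ^ p := Real.mul_rpow (by norm_num) hhpos.le
    have hhp : (0 : ℝ) < h ^ p := Real.rpow_pos_of_pos hhpos p
    have h2p : (0 : ℝ) < (2 : ℝ) ^ p := Real.rpow_pos_of_pos (by norm_num) p
    have hXY : X * Y ^ (p - 1) ≤ max A 0 * (2 ^ p * h ^ p) := by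
      have hpos : (0 : ℝ) < (2 * h) ^ p := Real.rpow_pos_of_pos h2hpos p
      have := mul_le_mul_of_nonneg_left hAineq hpos.le
      calc X * Y ^ (p - 1)
          = (2 * h) ^ p * (((2 * h) ^ p)⁻¹ * X * Y ^ (p - 1)) := by
            field_simp
        _ ≤ (2 * h) ^ p * A := this
        _ ≤ max A 0 * (2 ^ p * h ^ p) := by
            rw [← h2h, mul_comm]
            exact mul_le_mul_of_nonneg_right (le_max_left _ _) hpos.le
    have hh' : h⁻¹ * h⁻¹ ^ (p - 1) = (h ^ p)⁻¹ := by
      rw [Real.inv_rpow hhpos.le, ← mul_inv]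
      congr 1
      calc h * h ^ (p - 1) = h ^ (1 : ℝ) * h ^ (p - 1) := by rw [Real.rpow_one]
        _ = h ^ (1 + (p - 1)) := (Real.rpow_add hhpos 1 (p - 1)).symm
        _ = h ^ p := by ring_nf
    have huv : u * v ^ (p - 1) = (h ^ p)⁻¹ * (X * Y ^ (p - 1)) := by
      rw [hu, hv, Real.mul_rpow (by positivity) hY0, ← hh']
      ring
    rw [huv]
    calc (h ^ p)⁻¹ * (X * Y ^ (p - 1))
        ≤ (h ^ p)⁻¹ * (max A 0 * (2 ^ p * h ^ p)) :=
          mul_le_mul_of_nonneg_left hXY (by positivity)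
      _ = 2 ^ p * max A 0 := by field_simp
  -- reverse Hölder bounds on the outer intervals
  have hT1le : h⁻¹ * T1 ≤ max C 0 * u ^ r := by
    refine hRH1.trans ?_
    exact mul_le_mul_of_nonneg_right (le_max_left _ _) (Real.rpow_nonneg hu0 _)
  have hT2le : h⁻¹ * T2 ≤ max C 0 * v ^ r := by
    refine hRH2.trans ?_
    exact mul_le_mul_of_nonneg_right (le_max_left _ _) (Real.rpow_nonneg hv0 _)
  have e1 : (v ^ r) ^ (p - 1) = (v ^ (p - 1)) ^ r := by
    rw [← Real.rpow_mul hv0, ← Real.rpow_mul hv0, mul_comm]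
  have e2 : (u * v ^ (p - 1)) ^ r = u ^ r * (v ^ r) ^ (p - 1) := by
    rw [Real.mul_rpow hu0 (Real.rpow_nonneg hv0 _), e1]
  calc (h⁻¹ * T1) * (h⁻¹ * T2) ^ (p - 1)
      ≤ (max C 0 * u ^ r) * (max C 0 * v ^ r) ^ (p - 1) := by
        apply mul_le_mul hT1le (Real.rpow_le_rpow hT20 hT2le hp1)
          (Real.rpow_nonneg hT20 _)
          (mul_nonneg hC0 (Real.rpow_nonneg hu0 _))
    _ = max C 0 * (max C 0) ^ (p - 1) * (u * v ^ (p - 1)) ^ r := by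
        rw [Real.mul_rpow hC0 (Real.rpow_nonneg hv0 _), e2]; ring
    _ ≤ max C 0 * (max C 0) ^ (p - 1) * ((2 : ℝ) ^ p * max A 0) ^ r := by
        apply mul_le_mul_of_nonneg_left
          (Real.rpow_le_rpow (mul_nonneg hu0 (Real.rpow_nonneg hv0 _)) key hr0)
          (mul_nonneg hC0 (Real.rpow_nonneg hC0 _))
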